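/- For binary vectors a, b of length n, the function d(a,b) defined from the support set S (the positions where a and b differ, augmented by n+1 if the Hamming distance is odd) via d(a,b) = ℓ·Σ_{i=1}^{|S|/2}(s_{2i} − s_{2i−1}) is a metric on {0,1}^n. -/

import Mathlib

/-- The alternating gap sum `Σ (s_{2i} − s_{2i−1})` of a (sorted) list
`s_1, s_2, s_3, s_4, …`, pairing consecutive elements. -/
def pairGapSum : List ℕ → ℕ
  | p :: q :: rest => (q - p) + pairGapSum rest
  | _ => 0

/-- The support set of a pair of binary strings: the (1-indexed) positions
where they differ, augmented by `n + 1` when that number is odd. -/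
def supportSet {n : ℕ} (a b : Fin n → Bool) : Finset ℕ :=
  let P : Finset ℕ :=
    (Finset.univ.filter (fun i : Fin n => a i ≠ b i)).image (fun i : Fin n => (i : ℕ) + 1)
  if Even P.card then P else insert (n + 1) P

/-- The gap-sum distance `d(a,b) = ℓ · Σ (s_{2i} − s_{2i−1})` over the sorted
(odd-augmented) support set. -/
def gapDist (ℓ : ℕ) {n : ℕ} (a b : Fin n → Bool) : ℕ :=
  ℓ * pairGapSum ((supportSet a b).sort (· ≤ ·))

lemma pairGapSum_eq_card : ∀ (l : List ℕ), l.Pairwise (· ≤ ·) → Even l.length →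
    ∀ N : ℕ, (∀ x ∈ l, x ≤ N) →
    pairGapSum l
      = ((Finset.range N).filter (fun t => Odd (l.countP (fun s => decide (s ≤ t))))).card
  | [], _, _, N, _ => by simp [pairGapSum]
  | [p], _, he, N, _ => by simp at he
  | p :: q :: rest, hs, he, N, hN => by
    have hpq : p ≤ q := List.rel_of_pairwise_cons hs (by simp)
    have hrest : rest.Pairwise (· ≤ ·) := (hs.of_cons).of_cons
    have hq : ∀ x ∈ rest, q ≤ x := fun x hx => List.rel_of_pairwise_cons hs.of_cons hx
    have he' : Even rest.length := by simpa [Nat.even_add_one, parity_simps] using he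
    have hqN : q ≤ N := hN q (by simp)
    have ih := pairGapSum_eq_card rest hrest he' N (fun x hx => hN x (by simp [hx]))
    have key : ∀ t, (Odd ((p :: q :: rest).countP (fun s => decide (s ≤ t)))
        ↔ ((p ≤ t ∧ t < q) ∨ Odd (rest.countP (fun s => decide (s ≤ t))))) := by
      intro t
      rcases lt_or_ge t q with h | h
      · have h0 : rest.countP (fun s => decide (s ≤ t)) = 0 := by
          rw [List.countP_eq_zero]
          intro x hx
          simpa using (lt_of_lt_of_le h (hq x hx)).not_ge
        simp only [List.countP_cons, h0]
        rcases le_or_gt p t with hp | hp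
        · simp [hp, h.not_ge, h, Nat.odd_iff]
        · simp [hp.not_ge, h.not_ge, h, hp, Nat.odd_iff]
      · simp only [List.countP_cons, decide_eq_true_eq, h, hpq.trans h, if_pos]
        constructor
        · intro hodd
          right
          rcases Nat.even_or_odd (rest.countP (fun s => decide (s ≤ t))) with he2 | ho2
          · exfalso
            rw [Nat.odd_iff] at hodd
            rw [Nat.even_iff] at he2
            omega
          · exact ho2
        · intro hh
          rcases hh with ⟨_, hc⟩ | ho2
          · omega
          · rw [Nat.odd_iff] at ho2 ⊢; omega
    have hdisj : Disjoint
        ((Finset.range N).filter (fun t => p ≤ t ∧ t < q))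
        ((Finset.range N).filter (fun t => Odd (rest.countP (fun s => decide (s ≤ t))))) := by
      rw [Finset.disjoint_filter]
      intro t _ ht hodd
      have : ∃ x ∈ rest, decide (x ≤ t) = true := by
        by_contra hno
        push_neg at hno
        have : rest.countP (fun s => decide (s ≤ t)) = 0 :=
          List.countP_eq_zero.2 (fun x hx => by simpa using hno x hx)
        simp [this] at hodd
      obtain ⟨x, hx, hxt⟩ := this
      exact absurd ((hq x hx).trans (by simpa using hxt)) (Nat.not_le.2 ht.2)
    have hsplit : ((Finset.range N).filter
          (fun t => Odd ((p :: q :: rest).countP (fun s => decide (s ≤ t)))))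
        = ((Finset.range N).filter (fun t => p ≤ t ∧ t < q))
          ∪ ((Finset.range N).filter (fun t => Odd (rest.countP (fun s => decide (s ≤ t))))) := by
      rw [← Finset.filter_or]
      exact Finset.filter_congr (fun t _ => by simpa using key t)
    rw [hsplit, Finset.card_union_of_disjoint hdisj, ← ih]
    have hico : (Finset.range N).filter (fun t => p ≤ t ∧ t < q) = Finset.Ico p q := by
      ext t
      simp only [Finset.mem_filter, Finset.mem_range, Finset.mem_Ico]
      omega
    rw [hico, Nat.card_Ico]
    rfl

/-- Number of differing positions (1-indexed) among the first `t` coordinates. -/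
def diffCount {n : ℕ} (a b : Fin n → Bool) (t : ℕ) : ℕ :=
  (Finset.univ.filter (fun i : Fin n => a i ≠ b i ∧ (i : ℕ) + 1 ≤ t)).card

lemma countP_sort_eq (s : Finset ℕ) (t : ℕ) :
    (s.sort (· ≤ ·)).countP (fun x => decide (x ≤ t)) = (s.filter (fun x => x ≤ t)).card := by
  rw [← Multiset.coe_countP, Finset.sort_eq, Multiset.countP_eq_card_filter]
  rw [Finset.card, Finset.filter_val]

lemma supportSet_facts {n : ℕ} (a b : Fin n → Bool) :
    Even (supportSet a b).card ∧ (∀ x ∈ supportSet a b, x ≤ n + 1) ∧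
    (∀ t, t ≤ n → ((supportSet a b).filter (fun x => x ≤ t)).card = diffCount a b t) := by
  set P := (Finset.univ.filter (fun i : Fin n => a i ≠ b i)).image (fun i : Fin n => (i : ℕ) + 1) with hP
  have hPle : ∀ x ∈ P, x ≤ n := by
    intro x hx
    simp only [hP, Finset.mem_image] at hx
    obtain ⟨i, _, rfl⟩ := hx
    omega
  have hnot : (n + 1) ∉ P := fun h => by have := hPle _ h; omega
  have hS : supportSet a b = if Even P.card then P else insert (n + 1) P := rfl
  have hfilt : ∀ t, t ≤ n → ((supportSet a b).filter (fun x => x ≤ t)) = P.filter (fun x => x ≤ t) := by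
    intro t ht
    rw [hS]
    split_ifs with h
    · rfl
    · rw [Finset.filter_insert, if_neg (by omega)]
  refine ⟨?_, ?_, ?_⟩
  · rw [hS]; split_ifs with h
    · exact h
    · rw [Finset.card_insert_of_notMem hnot]
      rw [Nat.even_add_one]
      simpa using h
  · intro x hx
    rw [hS] at hx
    split_ifs at hx with h
    · exact le_trans (hPle x hx) (by omega)
    · rcases Finset.mem_insert.1 hx with rfl | hx
      · exact le_refl _
      · exact le_trans (hPle x hx) (by omega)
  · intro t ht
    rw [hfilt t ht, hP, Finset.filter_image]
    rw [Finset.card_image_of_injective _ (fun i j h => Fin.val_injective (by omega))]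
    rw [Finset.filter_filter]
    rfl

lemma gapDist_eq (ℓ : ℕ) {n : ℕ} (a b : Fin n → Bool) :
    gapDist ℓ a b
      = ℓ * ((Finset.range (n + 1)).filter (fun t => Odd (diffCount a b t))).card := by
  obtain ⟨heven, hle, hcnt⟩ := supportSet_facts a b
  unfold gapDist
  congr 1
  rw [pairGapSum_eq_card _ (Finset.pairwise_sort _ _)
      (by simpa [Finset.length_sort] using heven) (n + 1)
      (fun x hx => hle x ((Finset.mem_sort _).1 hx))]
  congr 1
  apply Finset.filter_congr
  intro t ht
  have ht' : t ≤ n := by simpa using Nat.lt_succ_iff.1 (Finset.mem_range.1 ht)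
  rw [countP_sort_eq, hcnt t ht']

lemma diffCount_parity {n : ℕ} (a b c : Fin n → Bool) (t : ℕ) :
    Even (diffCount a b t + diffCount b c t + diffCount a c t) := by
  unfold diffCount
  rw [Finset.card_filter, Finset.card_filter, Finset.card_filter,
    ← Finset.sum_add_distrib, ← Finset.sum_add_distrib]
  apply Finset.even_sum
  intro i _
  by_cases h : (i : ℕ) + 1 ≤ t <;>
    cases ha : a i <;> cases hb : b i <;> cases hc : c i <;> simp [h, ha, hb, hc]

lemma diffCount_symm {n : ℕ} (a b : Fin n → Bool) (t : ℕ) :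
    diffCount a b t = diffCount b a t := by
  unfold diffCount
  congr 1
  apply Finset.filter_congr
  intro i _
  simp [ne_comm]

lemma diffCount_self {n : ℕ} (a : Fin n → Bool) (t : ℕ) : diffCount a a t = 0 := by
  unfold diffCount
  simp

/-- The gap-sum distance is a metric on `{0,1}^n`: it vanishes exactly on the
diagonal, is symmetric, and satisfies the triangle inequality. -/
theorem gapDist_is_metric (ℓ n : ℕ) (hℓ : 0 < ℓ) :
    (∀ a b : Fin n → Bool, gapDist ℓ a b = 0 ↔ a = b) ∧
    (∀ a b : Fin n → Bool, gapDist ℓ a b = gapDist ℓ b a) ∧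
    (∀ a b c : Fin n → Bool, gapDist ℓ a c ≤ gapDist ℓ a b + gapDist ℓ b c) := by
  refine ⟨?_, ?_, ?_⟩
  · intro a b
    constructor
    · intro h
      rw [gapDist_eq] at h
      have hcard : ((Finset.range (n + 1)).filter (fun t => Odd (diffCount a b t))).card = 0 := by
        rcases Nat.mul_eq_zero.1 h with h' | h'
        · omega
        · exact h'
      rw [Finset.card_eq_zero] at hcard
      by_contra hne
      have hne' : ∃ i, a i ≠ b i := by
        by_contra hall
        push_neg at hall
        exact hne (funext hall)
      obtain ⟨i, hi⟩ := hne'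
      set s := Finset.univ.filter (fun j : Fin n => a j ≠ b j) with hs
      have hsne : s.Nonempty := ⟨i, by simp [hs, hi]⟩
      set i0 := s.min' hsne with hi0
      have hmem : i0 ∈ s := s.min'_mem hsne
      have hone : diffCount a b ((i0 : ℕ) + 1) = 1 := by
        unfold diffCount
        rw [Finset.card_eq_one]
        refine ⟨i0, ?_⟩
        ext j
        simp only [Finset.mem_filter, Finset.mem_univ, true_and, Finset.mem_singleton]
        constructor
        · rintro ⟨hj, hjle⟩
          have h1 : i0 ≤ j := s.min'_le j (by simp [hs, hj])
          have h2 : (j : ℕ) ≤ (i0 : ℕ) := by omega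
          exact Fin.le_antisymm (by exact_mod_cast h2) h1 ▸ rfl
        · rintro rfl
          exact ⟨by simpa [hs] using hmem, le_refl _⟩
      have htmem : (i0 : ℕ) + 1 ∈ (Finset.range (n + 1)).filter
          (fun t => Odd (diffCount a b t)) := by
        refine Finset.mem_filter.2 ⟨Finset.mem_range.2 (by omega), ?_⟩
        rw [hone]
        exact odd_one
      rw [hcard] at htmem
      exact absurd htmem (Finset.notMem_empty _)
    · rintro rfl
      rw [gapDist_eq]
      have : (Finset.range (n + 1)).filter (fun t => Odd (diffCount a a t)) = ∅ := by
        apply Finset.eq_empty_of_forall_notMem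
        intro t ht
        rw [Finset.mem_filter, diffCount_self] at ht
        exact (Nat.not_odd_iff_even.2 Even.zero) ht.2
      rw [this]
      simp
  · intro a b
    rw [gapDist_eq, gapDist_eq]
    congr 2
    apply Finset.filter_congr
    intro t _
    rw [diffCount_symm]
  · intro a b c
    rw [gapDist_eq ℓ a c, gapDist_eq ℓ a b, gapDist_eq ℓ b c, ← Nat.mul_add]
    apply Nat.mul_le_mul_left
    have hsub : (Finset.range (n + 1)).filter (fun t => Odd (diffCount a c t))
        ⊆ ((Finset.range (n + 1)).filter (fun t => Odd (diffCount a b t)))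
          ∪ ((Finset.range (n + 1)).filter (fun t => Odd (diffCount b c t))) := by
      intro t ht
      rw [Finset.mem_filter] at ht
      have hpar := diffCount_parity a b c t
      rw [Finset.mem_union, Finset.mem_filter, Finset.mem_filter]
      rw [Nat.even_iff] at hpar
      rw [Nat.odd_iff] at ht ⊢
      rw [Nat.odd_iff]
      rcases ht with ⟨htr, hodd⟩
      by_cases h1 : diffCount a b t % 2 = 1
      · exact Or.inl ⟨htr, h1⟩
      · refine Or.inr ⟨htr, ?_⟩
        omega
    exact le_trans (Finset.card_le_card hsub) (Finset.card_union_le _ _)
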